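/- (Lemma A2) Let ζ₀, ζ₁, ζ₂ be mutually independent real-valued random variables such that: (1) ζ₀ is symmetric about 0 (its law is invariant under negation) and unimodal about 0, meaning its cumulative distribution function is convex on (−∞,0) and concave on (0,∞); (2) the laws of ζ₁ and ζ₂ are symmetric about 0; (3) P(|ζ₁| ≤ c) ≥ P(|ζ₂| ≤ c) for every c ≥ 0. Then P(|ζ₀ + ζ₁| ≤ c) ≥ P(|ζ₀ + ζ₂| ≤ c) for every c ≥ 0. -/

import Mathlib

open MeasureTheory ProbabilityTheory

/-- Four-point inequality for concave functions on `[0,∞)`. -/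
lemma aux_concave_four {F : ℝ → ℝ} (hF : ConcaveOn ℝ (Set.Ici (0:ℝ)) F)
    {u p q v : ℝ} (hu : 0 ≤ u) (hup : u ≤ p) (hpv : p ≤ v) (huq : u ≤ q) (hqv : q ≤ v)
    (hsum : u + v = p + q) : F u + F v ≤ F p + F q := by
  rcases eq_or_lt_of_le (hup.trans hpv) with h | huv
  · have hp : p = u := le_antisymm (by linarith) hup
    have hq : q = u := le_antisymm (by linarith) huq
    rw [hp, hq, ← h]
  · set lam : ℝ := (v - p)/(v - u) with hlamdef
    have hvu : (0:ℝ) < v - u := by linarith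
    have hlam : lam * (v - u) = v - p := div_mul_cancel₀ _ hvu.ne'
    have h1 : 0 ≤ lam := div_nonneg (by linarith) hvu.le
    have h2 : 0 ≤ 1 - lam := by
      have : lam ≤ 1 := (div_le_one hvu).2 (by linarith)
      linarith
    have hu' : u ∈ Set.Ici (0:ℝ) := hu
    have hv' : v ∈ Set.Ici (0:ℝ) := le_trans hu (by linarith)
    have e1 : lam * u + (1 - lam) * v = p := by linear_combination -hlam
    have e2 : (1 - lam) * u + lam * v = q := by linear_combination hlam + hsum
    have A : lam * F u + (1 - lam) * F v ≤ F p := by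
      have := hF.2 hu' hv' h1 h2 (by ring)
      rw [smul_eq_mul, smul_eq_mul, smul_eq_mul, smul_eq_mul, e1] at this
      exact this
    have B : (1 - lam) * F u + lam * F v ≤ F q := by
      have := hF.2 hu' hv' h2 h1 (by ring)
      rw [smul_eq_mul, smul_eq_mul, smul_eq_mul, smul_eq_mul, e2] at this
      exact this
    nlinarith [A, B]

/-- monotonicity step when `y ≤ y' ≤ c`. -/
lemma aux_stepA {F : ℝ → ℝ} (hF : ConcaveOn ℝ (Set.Ici (0:ℝ)) F)
    {c y y' : ℝ} (hy : 0 ≤ y) (hyy : y ≤ y') (hy'c : y' ≤ c) :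
    F (c - y') + F (c + y') ≤ F (c - y) + F (c + y) := by
  have := aux_concave_four hF (u := c - y') (p := c - y) (q := c + y) (v := c + y')
    (by linarith) (by linarith) (by linarith) (by linarith) (by linarith) (by ring)
  linarith

/-- monotonicity step when `c ≤ y ≤ y'`. -/
lemma aux_stepB {F : ℝ → ℝ} (hF : ConcaveOn ℝ (Set.Ici (0:ℝ)) F)
    (hrefl : ∀ s : ℝ, s < 0 → F s = 1 - F (-s)) (hhalf : 1 ≤ 2 * F 0)
    {c y y' : ℝ} (hc : 0 ≤ c) (hcy : c ≤ y) (hyy : y ≤ y') :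
    F (c - y') + F (c + y') ≤ F (c - y) + F (c + y) := by
  rcases eq_or_lt_of_le hyy with rfl | hlt
  · exact le_refl _
  · have r1 : F (c - y') = 1 - F (y' - c) := by
      have h := hrefl (c - y') (by linarith)
      rwa [show -(c - y') = y' - c by ring] at h
    have r2 : 1 - F (y - c) ≤ F (c - y) := by
      rcases eq_or_lt_of_le hcy with rfl | h
      · simp only [sub_self]
        linarith
      · have h2 := hrefl (c - y) (by linarith)
        rw [show -(c - y) = y - c by ring] at h2
        linarith
    have key := aux_concave_four hF (u := y - c) (p := y' - c) (q := c + y) (v := c + y')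
      (by linarith) (by linarith) (by linarith) (by linarith) (by linarith) (by ring)
    linarith

/-- Full monotonicity of `y ↦ F (c - y) + F (c + y)` on `[0, ∞)`. -/
lemma aux_mono {F : ℝ → ℝ} (hF : ConcaveOn ℝ (Set.Ici (0:ℝ)) F)
    (hrefl : ∀ s : ℝ, s < 0 → F s = 1 - F (-s)) (hhalf : 1 ≤ 2 * F 0)
    {c y y' : ℝ} (hc : 0 ≤ c) (hy : 0 ≤ y) (hyy : y ≤ y') :
    F (c - y') + F (c + y') ≤ F (c - y) + F (c + y) := by
  rcases le_total y' c with h | h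
  · exact aux_stepA hF hy hyy h
  · rcases le_total c y with h2 | h2
    · exact aux_stepB hF hrefl hhalf hc h2 hyy
    · calc F (c - y') + F (c + y') ≤ F (c - c) + F (c + c) :=
            aux_stepB hF hrefl hhalf hc le_rfl h
        _ ≤ F (c - y) + F (c + y) := aux_stepA hF hy h2 le_rfl

/-- Comparison of measures of symmetric "solid" sets under stochastic domination. -/
lemma aux_solid_compare {ν₁ ν₂ : Measure ℝ} [IsProbabilityMeasure ν₁] [IsProbabilityMeasure ν₂]
    (hdom : ∀ c : ℝ, 0 ≤ c → ν₂ {y : ℝ | |y| ≤ c} ≤ ν₁ {y : ℝ | |y| ≤ c})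
    (S : Set ℝ) (hsym : ∀ y : ℝ, y ∈ S ↔ -y ∈ S)
    (hsolid : ∀ a b : ℝ, 0 ≤ a → a ≤ b → b ∈ S → a ∈ S) :
    ν₂ S ≤ ν₁ S := by
  have habs : ∀ y : ℝ, y ∈ S ↔ |y| ∈ S := by
    intro y
    rcases le_total 0 y with h | h
    · rw [abs_of_nonneg h]
    · rw [abs_of_nonpos h, ← hsym]
  rcases S.eq_empty_or_nonempty with rfl | ⟨y₀, hy₀⟩
  · simp
  have h0 : (0:ℝ) ∈ S := hsolid 0 |y₀| le_rfl (abs_nonneg _) ((habs y₀).1 hy₀)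
  by_cases hbdd : BddAbove (S ∩ Set.Ici 0)
  · set r := sSup (S ∩ Set.Ici 0) with hrdef
    have hne : (S ∩ Set.Ici 0).Nonempty := ⟨0, h0, Set.self_mem_Ici⟩
    have hr0 : 0 ≤ r := le_csSup hbdd ⟨h0, Set.self_mem_Ici⟩
    by_cases hrS : r ∈ S
    · have hSeq : S = {y : ℝ | |y| ≤ r} := by
        ext y; constructor
        · intro hy; exact le_csSup hbdd ⟨(habs y).1 hy, Set.mem_Ici.2 (abs_nonneg _)⟩
        · intro hy; exact (habs y).2 (hsolid |y| r (abs_nonneg _) hy hrS)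
      rw [hSeq]; exact hdom r hr0
    · have hrpos : 0 < r := lt_of_le_of_ne hr0 (fun h => hrS (h ▸ h0))
      have hSeq : S = {y : ℝ | |y| < r} := by
        ext y; constructor
        · intro hy
          have h1 : |y| ≤ r := le_csSup hbdd ⟨(habs y).1 hy, Set.mem_Ici.2 (abs_nonneg _)⟩
          rcases lt_or_eq_of_le h1 with h2 | h2
          · exact h2
          · exact absurd (h2 ▸ (habs y).1 hy) hrS
        · intro hy
          obtain ⟨b, hb, hyb⟩ := exists_lt_of_lt_csSup hne hy
          exact (habs y).2 (hsolid |y| b (abs_nonneg _) hyb.le hb.1)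
      rw [hSeq]
      have hU : {y : ℝ | |y| < r} =
          ⋃ q : {q : ℚ // 0 ≤ (q:ℝ) ∧ (q:ℝ) < r}, {y : ℝ | |y| ≤ ((q : ℚ) : ℝ)} := by
        ext y
        simp only [Set.mem_iUnion, Set.mem_setOf_eq]
        constructor
        · intro hy
          obtain ⟨q, hq1, hq2⟩ := exists_rat_btwn hy
          exact ⟨⟨q, le_trans (abs_nonneg y) hq1.le, hq2⟩, hq1.le⟩
        · rintro ⟨⟨q, hq0, hqr⟩, hyq⟩
          exact lt_of_le_of_lt hyq hqr
      have hdir : Directed (· ⊆ ·)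
          (fun q : {q : ℚ // 0 ≤ (q:ℝ) ∧ (q:ℝ) < r} => {y : ℝ | |y| ≤ ((q : ℚ) : ℝ)}) := by
        intro a b
        rcases le_total (a : ℚ) (b : ℚ) with h | h
        · exact ⟨b, fun y hy => Set.mem_setOf_eq ▸ le_trans (Set.mem_setOf_eq ▸ hy) (by exact_mod_cast h), fun y hy => hy⟩
        · exact ⟨a, fun y hy => hy, fun y hy => Set.mem_setOf_eq ▸ le_trans (Set.mem_setOf_eq ▸ hy) (by exact_mod_cast h)⟩
      rw [hU, Directed.measure_iUnion hdir, Directed.measure_iUnion hdir]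
      exact iSup_mono fun q => hdom _ q.2.1
  · have hSeq : S = Set.univ := by
      ext y
      simp only [Set.mem_univ, iff_true]
      obtain ⟨b, hbS, hb⟩ := not_bddAbove_iff.1 hbdd |y|
      exact (habs y).2 (hsolid |y| b (abs_nonneg _) hb.le hbS.1)
    rw [hSeq]
    simp

theorem statement16 {Ω : Type*} [MeasurableSpace Ω] (μ : Measure Ω)
    [IsProbabilityMeasure μ] (ζ₀ ζ₁ ζ₂ : Ω → ℝ)
    (hm0 : Measurable ζ₀) (hm1 : Measurable ζ₁) (hm2 : Measurable ζ₂)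
    (hindep : iIndepFun ![ζ₀, ζ₁, ζ₂] μ)
    (hsym0 : Measure.map (fun ω => -ζ₀ ω) μ = Measure.map ζ₀ μ)
    (hconvex : ConvexOn ℝ (Set.Iic (0 : ℝ))
      (fun c => (μ {ω | ζ₀ ω ≤ c}).toReal))
    (hconcave : ConcaveOn ℝ (Set.Ici (0 : ℝ))
      (fun c => (μ {ω | ζ₀ ω ≤ c}).toReal))
    (hsym1 : Measure.map (fun ω => -ζ₁ ω) μ = Measure.map ζ₁ μ)
    (hsym2 : Measure.map (fun ω => -ζ₂ ω) μ = Measure.map ζ₂ μ)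
    (hdom : ∀ c : ℝ, 0 ≤ c → μ {ω | |ζ₂ ω| ≤ c} ≤ μ {ω | |ζ₁ ω| ≤ c}) :
    ∀ c : ℝ, 0 ≤ c → μ {ω | |ζ₀ ω + ζ₂ ω| ≤ c} ≤ μ {ω | |ζ₀ ω + ζ₁ ω| ≤ c} := by
  intro c hc
  classical
  haveI hp0 : IsProbabilityMeasure (μ.map ζ₀) := Measure.isProbabilityMeasure_map hm0.aemeasurable
  haveI hp1 : IsProbabilityMeasure (μ.map ζ₁) := Measure.isProbabilityMeasure_map hm1.aemeasurable
  haveI hp2 : IsProbabilityMeasure (μ.map ζ₂) := Measure.isProbabilityMeasure_map hm2.aemeasurable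
  set F : ℝ → ℝ := fun t => (μ {ω | ζ₀ ω ≤ t}).toReal with hFdef
  have hFν : ∀ t : ℝ, μ {ω | ζ₀ ω ≤ t} = (μ.map ζ₀) (Set.Iic t) := by
    intro t; rw [Measure.map_apply hm0 measurableSet_Iic]; rfl
  have hne : ∀ s : Set ℝ, (μ.map ζ₀) s ≠ ⊤ := fun s => measure_ne_top _ s
  have hF1 : ∀ t : ℝ, F t = ((μ.map ζ₀) (Set.Iic t)).toReal := by
    intro t; simp only [hFdef]; exact congrArg ENNReal.toReal (hFν t)
  have hmapneg : (μ.map ζ₀).map Neg.neg = μ.map ζ₀ := by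
    rw [Measure.map_map measurable_neg hm0]; exact hsym0
  have hsymset : ∀ A : Set ℝ, MeasurableSet A →
      (μ.map ζ₀) ((fun x : ℝ => -x) ⁻¹' A) = (μ.map ζ₀) A := by
    intro A hA
    conv_rhs => rw [← hmapneg]
    rw [Measure.map_apply measurable_neg hA]
  have hIoi : ∀ s : ℝ, (μ.map ζ₀) (Set.Iio s) = (μ.map ζ₀) (Set.Ioi (-s)) := by
    intro s
    have h := hsymset (Set.Iio s) measurableSet_Iio
    have hpre : (fun x : ℝ => -x) ⁻¹' (Set.Iio s) = Set.Ioi (-s) := by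
      ext x; simp [neg_lt]
    rw [hpre] at h; exact h.symm
  have hFmono : Monotone F := by
    intro a b hab
    exact ENNReal.toReal_mono (measure_ne_top μ _) (measure_mono fun ω h => le_trans h hab)
  have hcompl : ∀ t : ℝ, (μ.map ζ₀) (Set.Ioi t) = 1 - (μ.map ζ₀) (Set.Iic t) := by
    intro t
    rw [← Set.compl_Iic, measure_compl measurableSet_Iic (hne _), measure_univ]
  have hhalf : 1 ≤ 2 * F 0 := by
    have h1 : (μ.map ζ₀) (Set.Iio 0) = (μ.map ζ₀) (Set.Ioi 0) := by simpa using hIoi 0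
    have h2 := hcompl 0
    have h3 : (μ.map ζ₀) (Set.Iio 0) ≤ (μ.map ζ₀) (Set.Iic 0) :=
      measure_mono Set.Iio_subset_Iic_self
    have h4 : ((μ.map ζ₀) (Set.Ioi 0)).toReal = 1 - ((μ.map ζ₀) (Set.Iic 0)).toReal := by
      rw [h2, ENNReal.toReal_sub_of_le prob_le_one ENNReal.one_ne_top, ENNReal.toReal_one]
    have h5 : ((μ.map ζ₀) (Set.Iio 0)).toReal ≤ ((μ.map ζ₀) (Set.Iic 0)).toReal :=
      ENNReal.toReal_mono (hne _) h3
    have h6 : ((μ.map ζ₀) (Set.Iio 0)).toReal = ((μ.map ζ₀) (Set.Ioi 0)).toReal := by rw [h1]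
    rw [hF1 0]
    linarith
  have hatom : ∀ s : ℝ, s < 0 → (μ.map ζ₀) {s} = 0 := by
    intro s hs
    set hfun : ℕ → ℝ := fun n => min (-s) (1/((n : ℝ)+1)) with hhdef
    have hpos : ∀ n, 0 < hfun n := fun n => lt_min (by linarith) (by positivity)
    have hkey : ∀ n : ℕ, ((μ.map ζ₀) {s}).toReal ≤ F (s + hfun n) - F s := by
      intro n
      have h1 : s - hfun n ∈ Set.Iic (0:ℝ) := by
        have := hpos n; simp only [Set.mem_Iic]; linarith
      have h2 : s + hfun n ∈ Set.Iic (0:ℝ) := by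
        have h2a : hfun n ≤ -s := min_le_left _ _
        simp only [Set.mem_Iic]; linarith
      have hcx := hconvex.2 h1 h2 (by norm_num : (0:ℝ) ≤ 1/2) (by norm_num : (0:ℝ) ≤ 1/2)
        (by norm_num)
      rw [smul_eq_mul, smul_eq_mul, smul_eq_mul, smul_eq_mul] at hcx
      rw [show (1/2 : ℝ) * (s - hfun n) + (1/2) * (s + hfun n) = s by ring] at hcx
      have hdisj : Disjoint (Set.Iic (s - hfun n)) ({s} : Set ℝ) := by
        rw [Set.disjoint_singleton_right]
        simp only [Set.mem_Iic, not_le]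
        have := hpos n; linarith
      have hsub : Set.Iic (s - hfun n) ∪ {s} ⊆ Set.Iic s := by
        intro x hx
        rcases hx with hx | hx
        · simp only [Set.mem_Iic] at hx ⊢; have := hpos n; linarith
        · simp only [Set.mem_singleton_iff] at hx; simp [hx]
      have hun : (μ.map ζ₀) (Set.Iic (s - hfun n)) + (μ.map ζ₀) {s}
          ≤ (μ.map ζ₀) (Set.Iic s) := by
        rw [← measure_union hdisj (measurableSet_singleton s)]
        exact measure_mono hsub
      have hun' : F (s - hfun n) + ((μ.map ζ₀) {s}).toReal ≤ F s := by
        rw [hF1 (s - hfun n), hF1 s, ← ENNReal.toReal_add (hne _) (hne _)]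
        exact ENNReal.toReal_mono (hne _) hun
      linarith
    have hmono_h : Antitone hfun := by
      intro m n hmn
      apply min_le_min le_rfl
      apply one_div_le_one_div_of_le (by positivity)
      have : (m : ℝ) ≤ (n : ℝ) := by exact_mod_cast hmn
      linarith
    have hanti : Antitone (fun n => Set.Iic (s + hfun n)) := fun m n hmn =>
      Set.Iic_subset_Iic.2 (by have := hmono_h hmn; linarith)
    have hInt : (⋂ n, Set.Iic (s + hfun n)) = Set.Iic s := by
      ext x
      simp only [Set.mem_iInter, Set.mem_Iic]
      constructor
      · intro hx
        by_contra hxs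
        push_neg at hxs
        obtain ⟨n, hn⟩ := exists_nat_one_div_lt (show (0:ℝ) < x - s by linarith)
        have h2 : hfun n ≤ 1/((n:ℝ)+1) := min_le_right _ _
        have := hx n
        linarith
      · intro hx n; have := (hpos n).le; linarith
    have htend : Filter.Tendsto (fun n => (μ.map ζ₀) (Set.Iic (s + hfun n)))
        Filter.atTop (nhds ((μ.map ζ₀) (Set.Iic s))) := by
      have := tendsto_measure_iInter_atTop (μ := μ.map ζ₀)
        (fun n => measurableSet_Iic.nullMeasurableSet) hanti ⟨0, hne _⟩
      rwa [hInt] at this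
    have htendR : Filter.Tendsto (fun n => F (s + hfun n)) Filter.atTop (nhds (F s)) := by
      have h2 := (ENNReal.tendsto_toReal (hne (Set.Iic s))).comp htend
      rw [hF1 s]
      exact h2.congr fun n => (hF1 _).symm
    have hle : ((μ.map ζ₀) {s}).toReal ≤ 0 := by
      have h3 : Filter.Tendsto (fun n => F (s + hfun n) - F s) Filter.atTop
          (nhds (F s - F s)) := htendR.sub_const (F s)
      rw [sub_self] at h3
      exact ge_of_tendsto' h3 hkey
    have h0 : ((μ.map ζ₀) {s}).toReal = 0 := le_antisymm hle ENNReal.toReal_nonneg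
    exact ((ENNReal.toReal_eq_zero_iff _).1 h0).resolve_right (hne _)
  have hrefl : ∀ s : ℝ, s < 0 → F s = 1 - F (-s) := by
    intro s hs
    have h1 : (μ.map ζ₀) (Set.Iic s) = (μ.map ζ₀) (Set.Iio s) := by
      apply le_antisymm
      · rw [← Set.Iio_union_right]
        calc (μ.map ζ₀) (Set.Iio s ∪ {s})
            ≤ (μ.map ζ₀) (Set.Iio s) + (μ.map ζ₀) {s} := measure_union_le _ _
          _ = (μ.map ζ₀) (Set.Iio s) := by rw [hatom s hs, add_zero]
      · exact measure_mono Set.Iio_subset_Iic_self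
    have h2 : (μ.map ζ₀) (Set.Iio s) = 1 - (μ.map ζ₀) (Set.Iic (-s)) := by
      rw [hIoi s, hcompl (-s)]
    rw [hF1 s, hF1 (-s), h1, h2,
      ENNReal.toReal_sub_of_le prob_le_one ENNReal.one_ne_top, ENNReal.toReal_one]
  set G : ℝ → ℝ := fun y => F (c - y) + F (c + y) - 1 with hGdef
  have hGeq : ∀ y : ℝ, G y = ((μ.map ζ₀) (Set.Icc (-c - y) (c - y))).toReal := by
    intro y
    have hsub : Set.Iio (-c - y) ⊆ Set.Iic (c - y) := by
      intro x hx
      simp only [Set.mem_Iio] at hx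
      simp only [Set.mem_Iic]
      linarith
    have hIcc : Set.Icc (-c - y) (c - y) = Set.Iic (c - y) \ Set.Iio (-c - y) := by
      ext x
      simp only [Set.mem_Icc, Set.mem_diff, Set.mem_Iic, Set.mem_Iio, not_lt]
      tauto
    have hd : (μ.map ζ₀) (Set.Icc (-c-y) (c-y))
        = (μ.map ζ₀) (Set.Iic (c-y)) - (μ.map ζ₀) (Set.Iio (-c-y)) := by
      rw [hIcc]
      exact measure_diff hsub measurableSet_Iio.nullMeasurableSet (hne _)
    have hio : (μ.map ζ₀) (Set.Iio (-c - y)) = 1 - (μ.map ζ₀) (Set.Iic (c + y)) := by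
      rw [hIoi, show -(-c - y) = c + y by ring, hcompl]
    have hle1 : (μ.map ζ₀) (Set.Iio (-c-y)) ≤ (μ.map ζ₀) (Set.Iic (c-y)) :=
      measure_mono hsub
    rw [hd, ENNReal.toReal_sub_of_le hle1 (hne _), hio,
      ENNReal.toReal_sub_of_le prob_le_one ENNReal.one_ne_top, ENNReal.toReal_one]
    simp only [hGdef]
    rw [hF1 (c - y), hF1 (c + y)]
    ring
  have hGofReal : ∀ y : ℝ, (μ.map ζ₀) {x : ℝ | |x + y| ≤ c} = ENNReal.ofReal (G y) := by
    intro y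
    have hset : {x : ℝ | |x + y| ≤ c} = Set.Icc (-c - y) (c - y) := by
      ext x
      simp only [Set.mem_setOf_eq, abs_le, Set.mem_Icc]
      constructor <;> (intro h; constructor <;> linarith [h.1, h.2])
    rw [hset, hGeq, ENNReal.ofReal_toReal (hne _)]
  have hGnonneg : ∀ y, 0 ≤ G y := fun y => (hGeq y) ▸ ENNReal.toReal_nonneg
  have hGsym : ∀ y : ℝ, G (-y) = G y := by
    intro y
    simp only [hGdef]
    rw [show c - -y = c + y by ring, show c + -y = c - y by ring]
    ring
  have hGanti : ∀ a b : ℝ, 0 ≤ a → a ≤ b → G b ≤ G a := by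
    intro a b ha hab
    have := aux_mono hconcave hrefl hhalf hc ha hab
    simp only [hGdef]
    linarith
  have hGmeas : Measurable G := by
    apply Measurable.sub _ measurable_const
    exact (hFmono.measurable.comp (measurable_const.sub measurable_id)).add
      (hFmono.measurable.comp (measurable_const.add measurable_id))
  have habs_meas : ∀ t : ℝ, MeasurableSet {y : ℝ | |y| ≤ t} := fun t =>
    measurableSet_le continuous_abs.measurable measurable_const
  have hdom' : ∀ t : ℝ, 0 ≤ t →
      (μ.map ζ₂) {y : ℝ | |y| ≤ t} ≤ (μ.map ζ₁) {y : ℝ | |y| ≤ t} := by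
    intro t ht
    rw [Measure.map_apply hm2 (habs_meas t), Measure.map_apply hm1 (habs_meas t)]
    exact hdom t ht
  have hlint : ∫⁻ y, ENNReal.ofReal (G y) ∂(μ.map ζ₂)
      ≤ ∫⁻ y, ENNReal.ofReal (G y) ∂(μ.map ζ₁) := by
    rw [lintegral_eq_lintegral_meas_lt _ (Filter.Eventually.of_forall hGnonneg)
        hGmeas.aemeasurable,
      lintegral_eq_lintegral_meas_lt _ (Filter.Eventually.of_forall hGnonneg)
        hGmeas.aemeasurable]
    apply lintegral_mono
    intro t
    apply aux_solid_compare hdom'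
    · intro y
      simp only [Set.mem_setOf_eq, hGsym y]
    · intro a b ha hab hb
      exact lt_of_lt_of_le hb (hGanti a b ha hab)
  have hS : MeasurableSet {p : ℝ × ℝ | |p.1 + p.2| ≤ c} :=
    measurableSet_le ((continuous_fst.add continuous_snd).abs.measurable) measurable_const
  have key : ∀ (ζ : Ω → ℝ), Measurable ζ →
      μ.map (fun ω => (ζ ω, ζ₀ ω)) = (μ.map ζ).prod (μ.map ζ₀) →
      μ {ω | |ζ₀ ω + ζ ω| ≤ c} = ∫⁻ y, ENNReal.ofReal (G y) ∂(μ.map ζ) := by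
    intro ζ hmζ hprod
    have h1 : {ω | |ζ₀ ω + ζ ω| ≤ c}
        = (fun ω => (ζ ω, ζ₀ ω)) ⁻¹' {p : ℝ × ℝ | |p.1 + p.2| ≤ c} := by
      ext ω
      simp only [Set.mem_setOf_eq, Set.mem_preimage]
      rw [add_comm]
    rw [h1, ← Measure.map_apply (hmζ.prodMk hm0) hS, hprod, Measure.prod_apply hS]
    apply lintegral_congr
    intro y
    rw [← hGofReal y]
    congr 1
    ext x
    simp only [Set.mem_preimage, Set.mem_setOf_eq]
    rw [add_comm]
  have h01 : IndepFun ζ₁ ζ₀ μ := (hindep.indepFun (show (0 : Fin 3) ≠ 1 by decide)).symm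
  have h02 : IndepFun ζ₂ ζ₀ μ := (hindep.indepFun (show (0 : Fin 3) ≠ 2 by decide)).symm
  have hprod1 : μ.map (fun ω => (ζ₁ ω, ζ₀ ω)) = (μ.map ζ₁).prod (μ.map ζ₀) :=
    (indepFun_iff_map_prod_eq_prod_map_map hm1.aemeasurable hm0.aemeasurable).1 h01
  have hprod2 : μ.map (fun ω => (ζ₂ ω, ζ₀ ω)) = (μ.map ζ₂).prod (μ.map ζ₀) :=
    (indepFun_iff_map_prod_eq_prod_map_map hm2.aemeasurable hm0.aemeasurable).1 h02
  rw [key ζ₂ hm2 hprod2, key ζ₁ hm1 hprod1]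
  exact hlint
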